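/- arXiv:2110.13946 — 2 statements merged into one kernel-verified Lean document; each statement's English description precedes it below -/
import Mathlib

section
/- The polar of the set D(V) = {f Hermitian | f ≥ 0, ‖f‖ ≤ 1} equals P(V) = {g Hermitian | g ≥ 0, tr(g) ≤ 1}. -/
open scoped ComplexOrder Matrix.Norms.L2Operator InnerProductSpace

def polar {n : ℕ} (C : Set (Matrix (Fin n) (Fin n) ℂ)) : Set (Matrix (Fin n) (Fin n) ℂ) :=
  {g | g.IsHermitian ∧ ∀ f ∈ C, 0 ≤ (f * g).trace ∧ (f * g).trace ≤ 1}

/-- The canonical QCS `D(V)`: positive semidefinite matrices of operator norm at most 1. -/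
noncomputable def ballD (n : ℕ) : Set (Matrix (Fin n) (Fin n) ℂ) :=
  {f | f.PosSemidef ∧ ‖f‖ ≤ 1}

/-- The canonical QCS `P(V)`: positive semidefinite matrices of trace at most 1. -/
def ballP (n : ℕ) : Set (Matrix (Fin n) (Fin n) ℂ) :=
  {f | f.PosSemidef ∧ f.trace ≤ 1}

open Matrix
namespace PolarAux

variable {n : ℕ}

lemma trace_nonneg_of_posSemidef {A : Matrix (Fin n) (Fin n) ℂ} (hA : A.PosSemidef) :
    0 ≤ A.trace := by
  rw [Matrix.trace]
  refine Finset.sum_nonneg fun i _ => ?_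
  exact hA.diag_nonneg

open scoped MatrixOrder in
lemma trace_mul_nonneg {A B : Matrix (Fin n) (Fin n) ℂ} (hA : A.PosSemidef) (hB : B.PosSemidef) :
    0 ≤ (A * B).trace := by
  have h1 : A * B = CFC.sqrt A * (CFC.sqrt A * B) := by rw [← mul_assoc, CFC.sqrt_mul_sqrt_self A hA.nonneg]
  rw [h1, Matrix.trace_mul_comm]
  have h2 : (CFC.sqrt A * B * (CFC.sqrt A).conjTranspose).PosSemidef :=
    hB.mul_mul_conjTranspose_same (CFC.sqrt A)
  rw [show (CFC.sqrt A).conjTranspose = CFC.sqrt A from (CFC.sqrt_nonneg A).posSemidef.1] at h2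
  exact trace_nonneg_of_posSemidef h2

lemma eigenvalues_le_norm {A : Matrix (Fin n) (Fin n) ℂ} (hA : A.IsHermitian) (i : Fin n) :
    hA.eigenvalues i ≤ ‖A‖ := by
  have hv : ‖hA.eigenvectorBasis i‖ = 1 := hA.eigenvectorBasis.orthonormal.1 i
  have h := A.l2_opNorm_mulVec (hA.eigenvectorBasis i)
  have heq : (EuclideanSpace.equiv (Fin n) ℂ).symm (A *ᵥ (hA.eigenvectorBasis i))
      = hA.eigenvalues i • hA.eigenvectorBasis i := by
    ext j
    exact congrFun (hA.mulVec_eigenvectorBasis i) j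
  rw [heq, norm_smul, hv] at h
  calc hA.eigenvalues i ≤ ‖hA.eigenvalues i‖ := le_abs_self _
    _ ≤ ‖A‖ := by simpa [hv] using h

lemma one_sub_posSemidef {f : Matrix (Fin n) (Fin n) ℂ} (hf : f.PosSemidef) (hn : ‖f‖ ≤ 1) :
    ((1 : Matrix (Fin n) (Fin n) ℂ) - f).PosSemidef := by
  have hev : ∀ i, hf.1.eigenvalues i ≤ 1 := fun i =>
    le_trans (eigenvalues_le_norm hf.1 i) hn
  have hU : (hf.1.eigenvectorUnitary : Matrix (Fin n) (Fin n) ℂ) *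
      star (hf.1.eigenvectorUnitary : Matrix (Fin n) (Fin n) ℂ) = 1 :=
    Matrix.mem_unitaryGroup_iff.mp (hf.1.eigenvectorUnitary).2
  have hd : Matrix.diagonal (fun i : Fin n => 1 - (hf.1.eigenvalues i : ℂ))
      = 1 - Matrix.diagonal (RCLike.ofReal ∘ hf.1.eigenvalues) := by
    rw [← Matrix.diagonal_one, ← Matrix.diagonal_sub]
    rfl
  have key : (1 : Matrix (Fin n) (Fin n) ℂ) - f
      = (hf.1.eigenvectorUnitary : Matrix (Fin n) (Fin n) ℂ) *
          Matrix.diagonal (fun i : Fin n => 1 - (hf.1.eigenvalues i : ℂ)) *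
          star (hf.1.eigenvectorUnitary : Matrix (Fin n) (Fin n) ℂ) := by
    rw [hd, Matrix.mul_sub, Matrix.sub_mul, Matrix.mul_one, hU]
    congr 1
    exact hf.1.spectral_theorem
  rw [key]
  have hdiag : (Matrix.diagonal (fun i : Fin n => 1 - (hf.1.eigenvalues i : ℂ))).PosSemidef := by
    refine Matrix.posSemidef_diagonal_iff.mpr fun i => ?_
    have : (0 : ℝ) ≤ 1 - hf.1.eigenvalues i := by linarith [hev i]
    simpa [Complex.ofReal_sub] using (Complex.zero_le_real.mpr this)
  exact hdiag.mul_mul_conjTranspose_same _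

end PolarAux

/-- The polar of D(V) equals P(V). -/
theorem polar_ballD_eq_ballP (n : ℕ) : polar (ballD n) = ballP n := by
  ext g
  constructor
  · rintro ⟨hg, hpol⟩
    have h1 : (1 : Matrix (Fin n) (Fin n) ℂ) ∈ ballD n := by
      refine ⟨Matrix.PosSemidef.one, ?_⟩
      rw [Matrix.cstar_norm_def, _root_.map_one, ContinuousLinearMap.one_def]
      exact ContinuousLinearMap.norm_id_le
    have ht := (hpol 1 h1).2
    rw [one_mul] at ht
    refine ⟨hg.posSemidef_iff_eigenvalues_nonneg.mpr fun i => ?_, ht⟩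
    set v : Fin n → ℂ := ⇑(hg.eigenvectorBasis i) with hvdef
    have hvv : dotProduct (star v) v = 1 := by
      have h2 := hg.eigenvectorBasis.orthonormal.1 i
      have h3 : (⟪hg.eigenvectorBasis i, hg.eigenvectorBasis i⟫_ℂ) = 1 := by
        rw [inner_self_eq_norm_sq_to_K, h2]; norm_num
      rw [EuclideanSpace.inner_eq_star_dotProduct] at h3
      rw [dotProduct_comm] at h3
      exact h3
    set f := Matrix.vecMulVec v (star v) with hfdef
    have hherm : f.IsHermitian := by
      ext p q
      simp [hfdef, Matrix.conjTranspose_apply, Matrix.vecMulVec_apply, mul_comm]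
    have hff : f * f = f := by
      ext p q
      simp only [hfdef, Matrix.mul_apply, Matrix.vecMulVec_apply]
      have hterm : ∀ k, (v p * star v k) * (v k * star v q)
          = (v p * star v q) * (star v k * v k) := fun k => by ring
      rw [Finset.sum_congr rfl fun k _ => hterm k, ← Finset.mul_sum,
        show (∑ k, star v k * v k) = dotProduct (star v) v from rfl, hvv, mul_one]
    have hfpsd : f.PosSemidef := by
      have h4 : f = fᴴ * f := by rw [hherm, hff]
      rw [h4]
      exact Matrix.posSemidef_conjTranspose_mul_self f
    have hfn : ‖f‖ ≤ 1 := by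
      have h5 : ‖f‖ * ‖f‖ = ‖f‖ := by
        rw [← Matrix.l2_opNorm_conjTranspose_mul_self, hherm, hff]
      nlinarith [norm_nonneg f]
    have hmul : g *ᵥ v = (hg.eigenvalues i : ℝ) • v := hg.mulVec_eigenvectorBasis i
    have htrace : (f * g).trace = (hg.eigenvalues i : ℂ) := by
      have hcalc : (f * g).trace = dotProduct (star v) (g *ᵥ v) := by
        simp only [Matrix.trace, Matrix.diag, Matrix.mul_apply, Matrix.vecMulVec_apply,
          dotProduct, Matrix.mulVec, Pi.star_apply, hfdef]
        rw [Finset.sum_comm]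
        refine Finset.sum_congr rfl fun q _ => ?_
        rw [Finset.mul_sum]
        refine Finset.sum_congr rfl fun p _ => ?_
        ring
      rw [hcalc, hmul]
      simp only [dotProduct, Pi.star_apply, Pi.smul_apply, Complex.real_smul]
      rw [show (∑ q, star (v q) * ((hg.eigenvalues i : ℂ) * v q))
          = (hg.eigenvalues i : ℂ) * dotProduct (star v) v by
        rw [dotProduct, Finset.mul_sum]
        exact Finset.sum_congr rfl fun q _ => by simp [dotProduct]; ring]
      rw [hvv, mul_one]
    have hpos := (hpol f ⟨hfpsd, hfn⟩).1
    rw [htrace] at hpos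
    exact_mod_cast Complex.zero_le_real.mp hpos
  · rintro ⟨hg, htr⟩
    refine ⟨hg.1, fun f hf => ⟨PolarAux.trace_mul_nonneg hf.1 hg, ?_⟩⟩
    have h := PolarAux.trace_mul_nonneg (PolarAux.one_sub_posSemidef hf.1 hf.2) hg
    rw [Matrix.sub_mul, one_mul, Matrix.trace_sub] at h
    exact le_trans (sub_nonneg.mp h) htr
end

section
/- The polar of the set P(V) = {g Hermitian | g ≥ 0, tr(g) ≤ 1} equals D(V) = {f Hermitian | f ≥ 0, ‖f‖ ≤ 1}; consequently both D(V) and P(V) are quantum coherent spaces. -/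
open scoped ComplexOrder Matrix.Norms.L2Operator

section helpers
open Matrix

variable {n : ℕ}

lemma star_mul_self_coe (z : ℂ) : star z * z = ((‖z‖^2 : ℝ) : ℂ) := by
  rw [Complex.star_def, ← Complex.normSq_eq_conj_mul_self]
  simp [Complex.normSq_eq_norm_sq]

lemma vmv_mulVec (x y : Fin n → ℂ) : vecMulVec x (star x) *ᵥ y = (star x ⬝ᵥ y) • x := by
  ext i
  simp only [Matrix.mulVec, vecMulVec_apply, dotProduct, Pi.smul_apply, smul_eq_mul,
    Pi.star_apply, Finset.sum_mul]
  exact Finset.sum_congr rfl fun j _ => by ring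

lemma vmv_posSemidef (x : Fin n → ℂ) : (vecMulVec x (star x)).PosSemidef := by
  refine Matrix.PosSemidef.of_dotProduct_mulVec_nonneg ?_ ?_
  · ext i j
    simp [conjTranspose_apply, vecMulVec_apply, mul_comm]
  · intro y
    rw [vmv_mulVec, dotProduct_smul]
    have h : star y ⬝ᵥ x = star (star x ⬝ᵥ y) := by
      rw [star_dotProduct]
    rw [smul_eq_mul, mul_comm, h]
    exact star_mul_self_nonneg _

lemma vmv_sq (x : Fin n → ℂ) :
    vecMulVec x (star x) * vecMulVec x (star x) = (star x ⬝ᵥ x) • vecMulVec x (star x) := by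
  ext i j
  simp only [Matrix.mul_apply, vecMulVec_apply, Pi.star_apply, Matrix.smul_apply, smul_eq_mul,
    dotProduct, Finset.sum_mul, Finset.mul_sum]
  exact Finset.sum_congr rfl fun k _ => by ring

lemma dot_star_self_coe (x : Fin n → ℂ) :
    star x ⬝ᵥ x = ((∑ i, ‖x i‖ ^ 2 : ℝ) : ℂ) := by
  rw [show ((∑ i, ‖x i‖ ^ 2 : ℝ) : ℂ) = ∑ i, ((‖x i‖ ^ 2 : ℝ) : ℂ) by push_cast; ring]
  exact Finset.sum_congr rfl fun i _ => star_mul_self_coe (x i)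

lemma vmv_trace (x : Fin n → ℂ) : (vecMulVec x (star x)).trace = star x ⬝ᵥ x := by
  simp [Matrix.trace, Matrix.diag, vecMulVec_apply, dotProduct, mul_comm]

lemma vmv_trace_mul (x : Fin n → ℂ) (g : Matrix (Fin n) (Fin n) ℂ) :
    (vecMulVec x (star x) * g).trace = star x ⬝ᵥ g *ᵥ x := by
  simp only [Matrix.trace, Matrix.diag, Matrix.mul_apply, vecMulVec_apply, dotProduct,
    Matrix.mulVec, Pi.star_apply]
  rw [Finset.sum_comm]
  exact Finset.sum_congr rfl fun j _ => by
    rw [Finset.mul_sum]; exact Finset.sum_congr rfl fun i _ => by ring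

lemma psd_trace_nonneg {M : Matrix (Fin n) (Fin n) ℂ} (hM : M.PosSemidef) : 0 ≤ M.trace := by
  rw [Matrix.trace]
  apply Finset.sum_nonneg
  intro i _
  have := hM.dotProduct_mulVec_nonneg (Pi.single i 1)
  simpa [dotProduct, Matrix.mulVec, Pi.single_apply, Matrix.diag] using this

open scoped MatrixOrder in
lemma psd_eq_ct_mul_self {M : Matrix (Fin n) (Fin n) ℂ} (hM : M.PosSemidef) :
    ∃ B : Matrix (Fin n) (Fin n) ℂ, M = Bᴴ * B := by
  obtain ⟨B, rfl⟩ := CStarAlgebra.nonneg_iff_eq_star_mul_self.mp hM.nonneg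
  exact ⟨B, rfl⟩

lemma trace_mul_nonneg {f g : Matrix (Fin n) (Fin n) ℂ} (hf : f.PosSemidef)
    (hg : g.PosSemidef) : 0 ≤ (f * g).trace := by
  obtain ⟨B, rfl⟩ := psd_eq_ct_mul_self hf
  rw [Matrix.mul_assoc, Matrix.trace_mul_comm]
  exact psd_trace_nonneg (hg.mul_mul_conjTranspose_same B)

lemma quad_conjTranspose_mul_self (B : Matrix (Fin n) (Fin n) ℂ) (x : Fin n → ℂ) :
    star x ⬝ᵥ (Bᴴ * B) *ᵥ x = star (B *ᵥ x) ⬝ᵥ (B *ᵥ x) := by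
  simp only [star_mulVec, dotProduct_mulVec, vecMul_vecMul]

noncomputable def eE (v : Fin n → ℂ) : EuclideanSpace ℂ (Fin n) := (WithLp.equiv 2 (Fin n → ℂ)).symm v

lemma dot_star_self_norm (v : Fin n → ℂ) :
    star v ⬝ᵥ v = ((‖eE v‖ ^ 2 : ℝ) : ℂ) := by
  rw [dot_star_self_coe]
  congr 1
  rw [EuclideanSpace.norm_eq, Real.sq_sqrt (by positivity)]
  rfl

lemma norm_le_one_of_quad {g : Matrix (Fin n) (Fin n) ℂ} (hg : g.PosSemidef)
    (h : ∀ x, star x ⬝ᵥ g *ᵥ x ≤ star x ⬝ᵥ x) : ‖g‖ ≤ 1 := by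
  obtain ⟨B, rfl⟩ := psd_eq_ct_mul_self hg
  have hBn : ‖B‖ ≤ 1 := by
    rw [Matrix.l2_opNorm_def]
    refine ContinuousLinearMap.opNorm_le_bound _ zero_le_one fun x => ?_
    rw [one_mul]
    set v : Fin n → ℂ := WithLp.equiv 2 _ x with hv
    have hx : x = eE v := rfl
    have key : star (B *ᵥ v) ⬝ᵥ (B *ᵥ v) ≤ star v ⬝ᵥ v :=
      (quad_conjTranspose_mul_self B v) ▸ h v
    rw [dot_star_self_norm, dot_star_self_norm, Complex.real_le_real] at key
    have h1 : ‖eE (B *ᵥ v)‖ ≤ ‖eE v‖ :=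
      le_of_pow_le_pow_left₀ two_ne_zero (norm_nonneg _) key
    rw [hx]
    exact h1
  calc ‖Bᴴ * B‖ = ‖B‖ * ‖B‖ := Matrix.l2_opNorm_conjTranspose_mul_self B
    _ ≤ 1 * 1 := mul_le_mul hBn hBn (norm_nonneg _) zero_le_one
    _ = 1 := one_mul 1

lemma quad_le_of_norm {g : Matrix (Fin n) (Fin n) ℂ} (hg : g.PosSemidef)
    (hn : ‖g‖ ≤ 1) (x : Fin n → ℂ) : star x ⬝ᵥ g *ᵥ x ≤ star x ⬝ᵥ x := by
  obtain ⟨B, rfl⟩ := psd_eq_ct_mul_self hg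
  have hBn : ‖B‖ ≤ 1 := by
    have h2 : ‖B‖ * ‖B‖ ≤ 1 := (Matrix.l2_opNorm_conjTranspose_mul_self B) ▸ hn
    nlinarith [norm_nonneg B]
  rw [quad_conjTranspose_mul_self, dot_star_self_norm, dot_star_self_norm,
    Complex.real_le_real]
  have hmv : ‖eE (B *ᵥ x)‖ ≤ ‖B‖ * ‖eE x‖ := Matrix.l2_opNorm_mulVec B (eE x)
  have : ‖eE (B *ᵥ x)‖ ≤ ‖eE x‖ := by
    calc ‖eE (B *ᵥ x)‖ ≤ ‖B‖ * ‖eE x‖ := hmv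
      _ ≤ 1 * ‖eE x‖ := mul_le_mul_of_nonneg_right hBn (norm_nonneg _)
      _ = ‖eE x‖ := one_mul _
  exact pow_le_pow_left₀ (norm_nonneg _) this 2

lemma quad_smul (g : Matrix (Fin n) (Fin n) ℂ) (r : ℝ) (x : Fin n → ℂ) :
    star ((r : ℂ) • x) ⬝ᵥ g *ᵥ ((r : ℂ) • x) = ((r ^ 2 : ℝ) : ℂ) * (star x ⬝ᵥ g *ᵥ x) := by
  rw [star_smul, Matrix.mulVec_smul, smul_dotProduct, dotProduct_smul]
  rw [Complex.star_def, Complex.conj_ofReal]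
  simp only [smul_eq_mul]
  push_cast
  ring

lemma dot_smul_self (r : ℝ) (x : Fin n → ℂ) :
    star ((r : ℂ) • x) ⬝ᵥ ((r : ℂ) • x) = ((r ^ 2 : ℝ) : ℂ) * (star x ⬝ᵥ x) := by
  rw [star_smul, smul_dotProduct, dotProduct_smul]
  rw [Complex.star_def, Complex.conj_ofReal]
  simp only [smul_eq_mul]
  push_cast
  ring

lemma quad_full {g : Matrix (Fin n) (Fin n) ℂ}
    (h : ∀ x, star x ⬝ᵥ x ≤ 1 → 0 ≤ star x ⬝ᵥ g *ᵥ x ∧ star x ⬝ᵥ g *ᵥ x ≤ 1) :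
    ∀ x, 0 ≤ star x ⬝ᵥ g *ᵥ x ∧ star x ⬝ᵥ g *ᵥ x ≤ star x ⬝ᵥ x := by
  intro x
  set s : ℝ := ∑ i, ‖x i‖ ^ 2 with hs
  have hds : star x ⬝ᵥ x = ((s : ℝ) : ℂ) := dot_star_self_coe x
  have hs0 : 0 ≤ s := Finset.sum_nonneg fun i _ => by positivity
  rcases eq_or_lt_of_le hs0 with hz | hpos
  · have hx0 : x = 0 := by
      funext i
      have := (Finset.sum_eq_zero_iff_of_nonneg (fun i _ => by positivity)).mp hz.symm i
        (Finset.mem_univ i)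
      simpa [pow_eq_zero_iff] using this
    simp [hx0]
  · set r : ℝ := (Real.sqrt s)⁻¹ with hr
    have hrs : r ^ 2 * s = 1 := by
      rw [hr, inv_pow, Real.sq_sqrt hs0]
      exact inv_mul_cancel₀ (ne_of_gt hpos)
    have hsc : ((s : ℝ) : ℂ) * ((r ^ 2 : ℝ) : ℂ) = 1 := by
      rw [← Complex.ofReal_mul, mul_comm s, hrs, Complex.ofReal_one]
    obtain ⟨h1, h2⟩ := h ((r : ℂ) • x) (by
      rw [dot_smul_self, hds, ← Complex.ofReal_mul, hrs, Complex.ofReal_one])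
    rw [quad_smul] at h1 h2
    have hQ : ((s : ℝ) : ℂ) * (((r ^ 2 : ℝ) : ℂ) * (star x ⬝ᵥ g *ᵥ x)) = star x ⬝ᵥ g *ᵥ x := by
      rw [← mul_assoc, hsc, one_mul]
    constructor
    · have := mul_nonneg (Complex.zero_le_real.mpr hs0) h1
      rwa [hQ] at this
    · have := mul_le_mul_of_nonneg_left h2 (Complex.zero_le_real.mpr hs0)
      rwa [hQ, mul_one, ← hds] at this

lemma vmv_norm_le_one (x : Fin n → ℂ) (hx : star x ⬝ᵥ x ≤ 1) :
    ‖vecMulVec x (star x)‖ ≤ 1 := by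
  set f := vecMulVec x (star x) with hf
  set s : ℝ := ∑ i, ‖x i‖ ^ 2 with hs
  have hs0 : 0 ≤ s := Finset.sum_nonneg fun i _ => by positivity
  have hs1 : s ≤ 1 := by
    rw [dot_star_self_coe x, show (1 : ℂ) = ((1 : ℝ) : ℂ) from rfl,
      Complex.real_le_real] at hx
    exact hx
  have hsq : f * f = ((s : ℝ) : ℂ) • f := by
    rw [hf, vmv_sq, dot_star_self_coe]
  have hC : ‖star f * f‖ = ‖f‖ * ‖f‖ := CStarRing.norm_star_mul_self
  have hstar : star f = f := by
    rw [Matrix.star_eq_conjTranspose, (vmv_posSemidef x).1]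
  rw [hstar, hsq, norm_smul] at hC
  have hnc : ‖((s : ℝ) : ℂ)‖ = s := by
    rw [Complex.norm_real, Real.norm_of_nonneg hs0]
  rw [hnc] at hC
  nlinarith [norm_nonneg f]

lemma norm_one_le_one' : ‖(1 : Matrix (Fin n) (Fin n) ℂ)‖ ≤ 1 := by
  rw [Matrix.cstar_norm_def, _root_.map_one (Matrix.toEuclideanCLM (n := Fin n) (𝕜 := ℂ)),
    ContinuousLinearMap.one_def]
  exact ContinuousLinearMap.norm_id_le


lemma polar_ballP {n : ℕ} : polar (ballP n) = ballD n := by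
  ext g
  constructor
  · rintro ⟨hherm, hg⟩
    have hq : ∀ x, star x ⬝ᵥ x ≤ 1 → 0 ≤ star x ⬝ᵥ g *ᵥ x ∧ star x ⬝ᵥ g *ᵥ x ≤ 1 := by
      intro x hx
      have hf : vecMulVec x (star x) ∈ ballP n := ⟨vmv_posSemidef x, by rwa [vmv_trace]⟩
      have := hg _ hf
      rwa [vmv_trace_mul] at this
    have h := quad_full hq
    have hpsd : g.PosSemidef := .of_dotProduct_mulVec_nonneg hherm fun x => (h x).1
    exact ⟨hpsd, norm_le_one_of_quad hpsd fun x => (h x).2⟩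
  · rintro ⟨hpsd, hn⟩
    refine ⟨hpsd.1, fun f hf => ⟨trace_mul_nonneg hf.1 hpsd, ?_⟩⟩
    have h1g : ((1 : Matrix (Fin n) (Fin n) ℂ) - g).PosSemidef := by
      refine Matrix.PosSemidef.of_dotProduct_mulVec_nonneg ((Matrix.isHermitian_one).sub hpsd.1) fun x => ?_
      have := quad_le_of_norm hpsd hn x
      rw [Matrix.sub_mulVec, Matrix.one_mulVec, dotProduct_sub]
      exact sub_nonneg.mpr this
    have h2 := trace_mul_nonneg hf.1 h1g
    rw [Matrix.mul_sub, Matrix.mul_one, Matrix.trace_sub] at h2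
    exact le_trans (sub_nonneg.mp h2) hf.2

lemma polar_ballD {n : ℕ} : polar (ballD n) = ballP n := by
  ext g
  constructor
  · rintro ⟨hherm, hg⟩
    have hq : ∀ x, star x ⬝ᵥ x ≤ 1 → 0 ≤ star x ⬝ᵥ g *ᵥ x ∧ star x ⬝ᵥ g *ᵥ x ≤ 1 := by
      intro x hx
      have hf : vecMulVec x (star x) ∈ ballD n := ⟨vmv_posSemidef x, vmv_norm_le_one x hx⟩
      have := hg _ hf
      rwa [vmv_trace_mul] at this
    have h := quad_full hq
    have hpsd : g.PosSemidef := .of_dotProduct_mulVec_nonneg hherm fun x => (h x).1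
    have h1 : (1 : Matrix (Fin n) (Fin n) ℂ) ∈ ballD n :=
      ⟨Matrix.PosSemidef.one, norm_one_le_one'⟩
    have htr := (hg 1 h1).2
    rw [Matrix.one_mul] at htr
    exact ⟨hpsd, htr⟩
  · rintro ⟨hpsd, htr⟩
    refine ⟨hpsd.1, fun f hf => ⟨trace_mul_nonneg hf.1 hpsd, ?_⟩⟩
    have h1f : ((1 : Matrix (Fin n) (Fin n) ℂ) - f).PosSemidef := by
      refine Matrix.PosSemidef.of_dotProduct_mulVec_nonneg ((Matrix.isHermitian_one).sub hf.1.1) fun x => ?_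
      have := quad_le_of_norm hf.1 hf.2 x
      rw [Matrix.sub_mulVec, Matrix.one_mulVec, dotProduct_sub]
      exact sub_nonneg.mpr this
    have h2 := trace_mul_nonneg h1f hpsd
    rw [Matrix.sub_mul, Matrix.one_mul, Matrix.trace_sub] at h2
    exact le_trans (sub_nonneg.mp h2) htr

end helpers

/-- The polar of P(V) equals D(V); consequently both are QCSs. -/
theorem polar_ballP_eq_ballD (n : ℕ) :
    polar (ballP n) = ballD n ∧
      polar (polar (ballD n)) = ballD n ∧ polar (polar (ballP n)) = ballP n := by
  refine ⟨polar_ballP, ?_, ?_⟩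
  · rw [polar_ballD, polar_ballP]
  · rw [polar_ballP, polar_ballD]
end
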